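/- For n ≥ 3 and p an odd prime, the Artinian local k-algebra A = k[x_1,...,x_{2n}]/(x_1x_2 + ... + x_{2n-1}x_{2n}, x_1^p, ..., x_{2n}^p) does not admit a flat lifting to W_2(k); that is, there is no flat W_2(k)-algebra B with B/pB ≅ A. -/

import Mathlib

set_option linter.unusedSectionVars false
set_option maxHeartbeats 1000000

section WittFacts

variable (p : ℕ) [Fact p.Prime] (k : Type) [Field k] [CharP k p] [PerfectRing k p]

lemma W2_p_sq : ((p : TruncatedWittVector p 2 k))^2 = 0 := by
  have h : ((p : WittVector p k)^2) ∈ RingHom.ker (WittVector.truncate (p := p) (R := k) 2) := by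
    rw [WittVector.mem_ker_truncate]
    intro i hi
    exact WittVector.coeff_p_pow_eq_zero p k (by omega)
  rw [RingHom.mem_ker, map_pow, map_natCast] at h
  exact h

lemma W2_ann_p (x : TruncatedWittVector p 2 k) (hx : (p : TruncatedWittVector p 2 k) * x = 0) :
    x ∈ Ideal.span {(p : TruncatedWittVector p 2 k)} := by
  obtain ⟨y, rfl⟩ := WittVector.truncate_surjective p 2 k x
  have hker : (p : WittVector p k) * y ∈ RingHom.ker (WittVector.truncate (p := p) (R := k) 2) := by
    rw [RingHom.mem_ker, map_mul, map_natCast, hx]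
  rw [WittVector.mem_ker_truncate] at hker
  have h1 : y.coeff 0 ^ p = 0 := by
    have := hker 1 (by omega)
    rwa [mul_comm, WittVector.mul_charP_coeff_succ (i := 0)] at this
  have h0 : y.coeff 0 = 0 :=
    pow_eq_zero_iff (Fact.out (p := p.Prime)).ne_zero |>.mp h1
  set c := (frobeniusEquiv k p).symm (y.coeff 1) with hc
  set u : WittVector p k := WittVector.mk p (fun i => if i = 0 then c else 0) with hu
  have hcp : c ^ p = y.coeff 1 := by
    have := (frobeniusEquiv k p).apply_symm_apply (y.coeff 1)
    rwa [_root_.frobeniusEquiv_apply, frobenius_def] at this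
  have key : WittVector.truncate 2 (u * (p : WittVector p k)) = WittVector.truncate 2 y := by
    apply TruncatedWittVector.ext
    intro i
    rw [WittVector.coeff_truncate, WittVector.coeff_truncate]
    fin_cases i
    · show (u * (p : WittVector p k)).coeff 0 = y.coeff 0
      rw [WittVector.mul_charP_coeff_zero, h0]
    · show (u * (p : WittVector p k)).coeff 1 = y.coeff 1
      rw [show (1:ℕ) = 0 + 1 from rfl, WittVector.mul_charP_coeff_succ]
      show (WittVector.mk p _).coeff 0 ^ p = _
      rw [WittVector.coeff_mk]
      simpa using hcp
  rw [Ideal.mem_span_singleton']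
  refine ⟨WittVector.truncate 2 u, ?_⟩
  rw [← map_natCast (WittVector.truncate (p := p) (R := k) 2), ← map_mul, key]

end WittFacts

open TensorProduct in
lemma flat_ann_p {R : Type*} [CommRing R] {B : Type*} [CommRing B] [Algebra R B]
    (hB : Module.Flat R B) (r : R)
    (hr2 : r * r = 0) (hann : ∀ x : R, r * x = 0 → x ∈ Ideal.span {r})
    (b : B) (hb : algebraMap R B r * b = 0) : ∃ c : B, b = algebraMap R B r * c := by
  classical
  set I : Ideal R := Ideal.span {r} with hI
  have hIker : I ≤ LinearMap.ker (LinearMap.lsmul R R r) := by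
    rw [hI, Ideal.span_le]
    rintro x rfl
    simp only [SetLike.mem_coe, LinearMap.mem_ker, LinearMap.lsmul_apply, smul_eq_mul, hr2]
  set j : (R ⧸ I) →ₗ[R] R := Submodule.liftQ I (LinearMap.lsmul R R r) hIker with hj
  have hjinj : Function.Injective j := by
    rw [← LinearMap.ker_eq_bot, hj, Submodule.ker_liftQ_eq_bot]
    intro x hx
    rw [LinearMap.mem_ker, LinearMap.lsmul_apply, smul_eq_mul] at hx
    exact hann x hx
  haveI := hB
  have hinj2 : Function.Injective (j.rTensor B) :=
    Module.Flat.rTensor_preserves_injective_linearMap j hjinj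
  have hbmem : b ∈ I • (⊤ : Submodule R B) := by
    have step1 : j.rTensor B ((TensorProduct.quotTensorEquivQuotSMul B I).symm
        (Submodule.Quotient.mk b)) = 0 := by
      rw [TensorProduct.quotTensorEquivQuotSMul_symm_mk]
      have h1 : j.rTensor B (((1 : R ⧸ I)) ⊗ₜ[R] b) = (j 1) ⊗ₜ[R] b := by
        simp [LinearMap.rTensor_tmul]
      rw [h1]
      have h2 : j (1 : R ⧸ I) = r := by
        show j (Submodule.Quotient.mk 1) = r
        rw [hj, Submodule.liftQ_apply, LinearMap.lsmul_apply, smul_eq_mul, mul_one]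
      rw [h2]
      have h3 : (r ⊗ₜ[R] b : R ⊗[R] B) = (1 : R) ⊗ₜ[R] (r • b) := by
        rw [← TensorProduct.smul_tmul, smul_eq_mul, mul_one]
      have h4 : r • b = 0 := by rw [Algebra.smul_def, hb]
      rw [h3, h4, TensorProduct.tmul_zero]
    have step2 : (TensorProduct.quotTensorEquivQuotSMul B I).symm
        (Submodule.Quotient.mk b) = 0 := hinj2 (by rw [step1]; simp)
    have step3 : (Submodule.Quotient.mk b : B ⧸ (I • (⊤ : Submodule R B))) = 0 :=
      (TensorProduct.quotTensorEquivQuotSMul B I).symm.injective (by rw [step2]; simp)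
    rwa [Submodule.Quotient.mk_eq_zero] at step3
  have main : ∀ z : B, z ∈ I • (⊤ : Submodule R B) → ∃ c : B, z = algebraMap R B r * c := by
    intro z hz
    refine Submodule.smul_induction_on hz ?_ ?_
    · intro s hs x _
      rw [hI, Ideal.mem_span_singleton'] at hs
      obtain ⟨w, rfl⟩ := hs
      refine ⟨w • x, ?_⟩
      rw [mul_comm w r, mul_smul, Algebra.smul_def]
    · rintro x y ⟨c, rfl⟩ ⟨d, rfl⟩
      exact ⟨c + d, by ring⟩
  exact main b hbmem


open MvPolynomial

noncomputable section

namespace NoLiftAux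

variable {p : ℕ} [Fact p.Prime]

/-- universal existence of the "Witt addendum" polynomial -/
lemma exists_w {R : Type*} [CommRing R] {α : Type*} (s : Finset α) (f : α → R) :
    ∃ w : R, (∑ i ∈ s, f i) ^ p = ∑ i ∈ s, (f i) ^ p + (p : R) * w := by
  classical
  induction s using Finset.induction_on with
  | empty =>
      refine ⟨0, ?_⟩
      simp [zero_pow (Fact.out (p := p.Prime)).ne_zero]
  | insert a s h ih =>
      obtain ⟨w, hw⟩ := ih
      obtain ⟨r, hr⟩ := exists_add_pow_prime_eq (Fact.out (p := p.Prime))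
        (f _) (∑ i ∈ _, f i)
      refine ⟨w + f a * (∑ i ∈ s, f i) * r, ?_⟩
      rw [Finset.sum_insert h, Finset.sum_insert h, hr, hw]
      ring


variable {n : ℕ} {k : Type} [Field k] [CharP k p]

section NotIn
variable {R : Type*} [CommSemiring R] {ι : Type*}

def NotIn (j0 : ι) (f : MvPolynomial ι R) : Prop :=
  ∀ m : ι →₀ ℕ, m j0 ≠ 0 → coeff m f = 0

lemma notIn_X {j0 i : ι} (h : i ≠ j0) : NotIn j0 (X i : MvPolynomial ι R) := by
  classical
  intro m hm
  rw [coeff_X']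
  split_ifs with he
  · exact absurd (by rw [← he, Finsupp.single_apply, if_neg h]) hm
  · rfl

lemma NotIn.mul {j0 : ι} {f g : MvPolynomial ι R} (hf : NotIn j0 f) (hg : NotIn j0 g) :
    NotIn j0 (f * g) := by
  classical
  intro m hm
  rw [coeff_mul]
  apply Finset.sum_eq_zero
  rintro ⟨a, b⟩ hab
  rw [Finset.HasAntidiagonal.mem_antidiagonal] at hab
  have : a j0 ≠ 0 ∨ b j0 ≠ 0 := by
    by_contra hc
    push_neg at hc
    exact hm (by rw [← hab, Finsupp.add_apply, hc.1, hc.2])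
  rcases this with h | h
  · rw [hf a h, zero_mul]
  · rw [hg b h, mul_zero]

lemma NotIn.sum {j0 : ι} {α : Type*} {s : Finset α} {f : α → MvPolynomial ι R}
    (h : ∀ a ∈ s, NotIn j0 (f a)) : NotIn j0 (∑ a ∈ s, f a) := by
  intro m hm
  rw [coeff_sum]
  exact Finset.sum_eq_zero fun a ha => h a ha m hm

lemma NotIn.pow {j0 : ι} {f : MvPolynomial ι R} (hf : NotIn j0 f) {e : ℕ} (he : e ≠ 0) :
    NotIn j0 (f ^ e) := by
  induction e with
  | zero => exact absurd rfl he
  | succ d ih =>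
      rcases Nat.eq_zero_or_pos d with rfl | hd
      · simpa using hf
      · rw [pow_succ]
        exact (ih hd.ne').mul hf

end NotIn

lemma coeff_mul_X_pow_eq_zero' {R : Type*} [CommSemiring R] {ι : Type*}
    (t : ι →₀ ℕ) (j : ι) (d : ℕ) (ht : t j < d) (f : MvPolynomial ι R) :
    coeff t (f * X j ^ d) = 0 := by
  classical
  rw [X_pow_eq_monomial, coeff_mul_monomial']
  rw [if_neg]
  intro hle
  have := hle j
  rw [Finsupp.single_apply, if_pos rfl] at this
  omega

lemma coeff_target_sum_pow {n : ℕ} (hn : 3 ≤ n)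
    (s : Finset (Fin n)) (h0 : (⟨0, by omega⟩ : Fin n) ∈ s) (h1 : (⟨1, by omega⟩ : Fin n) ∈ s) :
    coeff (Finsupp.single (⟨0, by omega⟩ : Fin n) (p-1) + Finsupp.single (⟨1, by omega⟩ : Fin n) 1)
      ((∑ i ∈ s, X i) ^ p : MvPolynomial (Fin n) ℤ) = (p : ℤ) := by
  classical
  have hp2 : 2 ≤ p := (Fact.out (p := p.Prime)).two_le
  set i0 : Fin n := ⟨0, by omega⟩
  set i1 : Fin n := ⟨1, by omega⟩
  have h01 : i0 ≠ i1 := by simp [i0, i1, Fin.ext_iff]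
  set t : Fin n →₀ ℕ := Finsupp.single i0 (p-1) + Finsupp.single i1 1 with hts
  have hti0 : t i0 = p - 1 := by
    simp [hts, Finsupp.single_apply, h01, Ne.symm h01]
  set g : MvPolynomial (Fin n) ℤ := ∑ i ∈ s.erase i0, X i with hg
  have hsum : (∑ i ∈ s, X i : MvPolynomial (Fin n) ℤ) = X i0 + g :=
    (Finset.add_sum_erase s X h0).symm
  have hgNot : NotIn i0 g :=
    NotIn.sum fun a ha => notIn_X (Finset.ne_of_mem_erase ha)
  have key : ∀ (kk : ℕ) (f : MvPolynomial (Fin n) ℤ), coeff t (X i0 ^ kk * f)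
      = if Finsupp.single i0 kk ≤ t then coeff (t - Finsupp.single i0 kk) f else 0 := by
    intro kk f
    rw [mul_comm, X_pow_eq_monomial, coeff_mul_monomial']
    split_ifs with h
    · rw [mul_one]
    · rfl
  have hle : ∀ kk : ℕ, (Finsupp.single i0 kk ≤ t ↔ kk ≤ p - 1) := by
    intro kk
    constructor
    · intro h
      have := h i0
      rw [Finsupp.single_apply, if_pos rfl] at this
      omega
    · intro h j
      rw [Finsupp.single_apply]
      rcases eq_or_ne j i0 with rfl | hj
      · rw [if_pos rfl, hti0]; exact h
      · rw [if_neg (Ne.symm hj)]; omega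
  rw [hsum, add_pow, coeff_sum]
  rw [Finset.sum_eq_single (p-1)]
  · rw [mul_assoc, key, if_pos ((hle _).mpr le_rfl)]
    have htsub : t - Finsupp.single i0 (p-1) = Finsupp.single i1 1 := by
      ext j
      rw [Finsupp.tsub_apply, hts, Finsupp.add_apply]
      rcases eq_or_ne j i0 with rfl | hj
      · simp [Finsupp.single_apply, h01, Ne.symm h01]
      · simp [Finsupp.single_apply, hj]
    rw [htsub]
    have hppred : p - (p-1) = 1 := by omega
    rw [hppred, pow_one]
    have hC : ((p.choose (p-1) : ℕ) : MvPolynomial (Fin n) ℤ) = C ((p.choose (p-1) : ℕ) : ℤ) :=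
      (C_eq_coe_nat _).symm
    rw [hC, mul_comm, coeff_C_mul]
    have hcoeffg : coeff (Finsupp.single i1 1) g = 1 := by
      rw [hg, coeff_sum]
      rw [Finset.sum_eq_single i1]
      · simp
      · intro b hb hbne
        rw [coeff_X', if_neg]
        intro hc
        exact hbne ((Finsupp.single_left_inj one_ne_zero).mp hc)
      · intro habs
        exact absurd (Finset.mem_erase.mpr ⟨Ne.symm h01, h1⟩) habs
    rw [hcoeffg, mul_one]
    have hch : p.choose (p-1) = p := by
      rw [Nat.choose_symm (by omega : 1 ≤ p), Nat.choose_one_right]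
    rw [hch]
  · intro b hb hbne
    rw [Finset.mem_range] at hb
    rw [mul_assoc, key]
    split_ifs with hleb
    · have hblt : b < p - 1 := lt_of_le_of_ne ((hle b).mp hleb) hbne
      rw [show ((p.choose b : ℕ) : MvPolynomial (Fin n) ℤ) = C ((p.choose b : ℕ) : ℤ)
        from (C_eq_coe_nat _).symm, mul_comm, coeff_C_mul]
      have hv : (t - Finsupp.single i0 b) i0 ≠ 0 := by
        rw [Finsupp.tsub_apply, hti0, Finsupp.single_apply, if_pos rfl]
        omega
      rw [hgNot.pow (by omega : p - b ≠ 0) _ hv, mul_zero]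
    · rfl
  · intro habs
    exfalso
    apply habs
    rw [Finset.mem_range]
    omega

abbrev Pa (n : ℕ) (k : Type) [Field k] := MvPolynomial (Fin n × Fin 2) k
abbrev Ta (n : ℕ) (k : Type) [Field k] := MvPolynomial (Fin n) k

/-- the "balanced exponent" condition -/
def Bal (m : Fin n × Fin 2 →₀ ℕ) : Prop := ∀ i : Fin n, m (i, 0) = m (i, 1)

instance (m : Fin n × Fin 2 →₀ ℕ) : Decidable (Bal m) := by
  unfold Bal; infer_instance

/-- restriction of exponents to first coordinates -/
def ι' (m : Fin n × Fin 2 →₀ ℕ) : Fin n →₀ ℕ :=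
  Finsupp.equivFunOnFinite.symm (fun i => m (i, 0))

@[simp] lemma ι'_apply (m : Fin n × Fin 2 →₀ ℕ) (j : Fin n) : ι' m j = m (j, 0) := rfl

/-- the balanced projection -/
def bp : Pa n k →ₗ[k] Ta n k :=
  (MvPolynomial.basisMonomials _ k).constr k
    (fun m => if Bal m then monomial (ι' m) (1 : k) else 0)

lemma bp_monomial (m : Fin n × Fin 2 →₀ ℕ) (c : k) :
    bp (monomial m c) = if Bal m then monomial (ι' m) c else 0 := by
  have hb : (monomial m c : Pa n k) = c • (MvPolynomial.basisMonomials _ k m) := by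
    rw [coe_basisMonomials]
    rw [smul_monomial, smul_eq_mul, mul_one]
  rw [hb, map_smul, bp, Module.Basis.constr_basis]
  split_ifs with h
  · rw [smul_monomial, smul_eq_mul, mul_one]
  · rw [smul_zero]

lemma bal_add_pair (i : Fin n) (u : Fin n × Fin 2 →₀ ℕ) :
    Bal (u + (Finsupp.single (i, 0) 1 + Finsupp.single (i, 1) 1)) ↔ Bal u := by
  unfold Bal
  apply forall_congr'
  intro j
  simp only [Finsupp.add_apply, Finsupp.single_apply, Prod.mk.injEq]
  rcases eq_or_ne i j with rfl | hij
  · simp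
  · simp [hij]

lemma ι'_add_pair (i : Fin n) (u : Fin n × Fin 2 →₀ ℕ) :
    ι' (u + (Finsupp.single (i, 0) 1 + Finsupp.single (i, 1) 1)) = ι' u + Finsupp.single i 1 := by
  ext j
  simp only [ι'_apply, Finsupp.add_apply, Finsupp.single_apply, Prod.mk.injEq]
  rcases eq_or_ne i j with rfl | hij
  · simp
  · simp [hij]

lemma bp_pair_mul (i : Fin n) (f : Pa n k) :
    bp (f * (X (i, 0) * X (i, 1))) = bp f * X i := by
  induction f using MvPolynomial.induction_on' with
  | add f g hf hg => rw [add_mul, map_add, map_add, hf, hg, add_mul]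
  | monomial u c =>
      have : (monomial u c : Pa n k) * (X (i,0) * X (i,1))
          = monomial (u + (Finsupp.single (i, 0) 1 + Finsupp.single (i, 1) 1)) c := by
        rw [X, X, monomial_mul, monomial_mul, mul_one, mul_one]
      rw [this, bp_monomial, bp_monomial]
      split_ifs with h1 h2 h2
      · rw [ι'_add_pair, X, monomial_mul, mul_one]
      · exact absurd ((bal_add_pair i u).mp h1) h2
      · exact absurd ((bal_add_pair i u).mpr h2) h1
      · rw [zero_mul]

lemma bp_xpow0 (i : Fin n) (f : Pa n k) :
    ∃ g : Ta n k, bp (f * X (i, 0) ^ p) = g * X i ^ p := by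
  induction f using MvPolynomial.induction_on' with
  | add f g hf hg =>
      obtain ⟨g1, h1⟩ := hf
      obtain ⟨g2, h2⟩ := hg
      exact ⟨g1 + g2, by rw [add_mul, map_add, h1, h2, add_mul]⟩
  | monomial u c =>
      rw [X_pow_eq_monomial, monomial_mul, mul_one]
      rw [bp_monomial]
      split_ifs with h
      · refine ⟨monomial (ι' u) c, ?_⟩
        rw [X_pow_eq_monomial, monomial_mul, mul_one]
        have hAB : ι' (u + Finsupp.single (i, 0) p) = ι' u + Finsupp.single i p := by
          ext j
          simp only [ι'_apply, Finsupp.add_apply, Finsupp.single_apply, Prod.mk.injEq]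
          rcases eq_or_ne i j with rfl | hij
          · simp
          · simp [hij]
        rw [hAB]
      · exact ⟨0, by rw [zero_mul]⟩

lemma bp_xpow1 (i : Fin n) (f : Pa n k) :
    ∃ g : Ta n k, bp (f * X (i, 1) ^ p) = g * X i ^ p := by
  induction f using MvPolynomial.induction_on' with
  | add f g hf hg =>
      obtain ⟨g1, h1⟩ := hf
      obtain ⟨g2, h2⟩ := hg
      exact ⟨g1 + g2, by rw [add_mul, map_add, h1, h2, add_mul]⟩
  | monomial u c =>
      rw [X_pow_eq_monomial, monomial_mul, mul_one]
      rw [bp_monomial]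
      split_ifs with h
      · have hip : u (i, 0) = u (i, 1) + p := by
          have h2 := h i
          simp only [Finsupp.add_apply, Finsupp.single_apply, Prod.mk.injEq] at h2
          simpa using h2
        refine ⟨monomial (ι' u - Finsupp.single i p) c, ?_⟩
        rw [X_pow_eq_monomial, monomial_mul, mul_one]
        have hAB : ι' (u + Finsupp.single (i, 1) p)
            = (ι' u - Finsupp.single i p) + Finsupp.single i p := by
          ext j
          simp only [ι'_apply, Finsupp.add_apply, Finsupp.tsub_apply, Finsupp.single_apply,
            Prod.mk.injEq]
          rcases eq_or_ne i j with rfl | hij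
          · simp [hip]
          · simp [hij]
        rw [hAB]
      · exact ⟨0, by rw [zero_mul]⟩

lemma bp_pair_pow_mul (i : Fin n) (b : ℕ) (f : Pa n k) :
    bp (f * (X (i, 0) * X (i, 1)) ^ b) = bp f * X i ^ b := by
  induction b with
  | zero => rw [pow_zero, pow_zero, mul_one, mul_one]
  | succ d ih =>
      rw [pow_succ, pow_succ, ← mul_assoc, bp_pair_mul, ih, mul_assoc]

/-- the "doubling" algebra map `u_i ↦ x_{i0} x_{i1}` -/
def th : Ta n k →ₐ[k] Pa n k := aeval fun i => X (i, 0) * X (i, 1)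

lemma bp_th (h : Ta n k) : bp (th h) = h := by
  induction h using MvPolynomial.induction_on' with
  | add f g hf hg => rw [map_add, map_add, hf, hg]
  | monomial u c =>
      induction u using Finsupp.induction with
      | zero =>
          have h1 : (monomial 0 c : Ta n k) = C c := by rw [monomial_zero']
          rw [h1, show (th (C c) : Pa n k) = C c from aeval_C _ c]
          rw [← monomial_zero' (R := k) (σ := Fin n × Fin 2), bp_monomial, if_pos]
          · have : ι' (0 : Fin n × Fin 2 →₀ ℕ) = 0 := by
              ext j
              rfl
            rw [this, monomial_zero']
          · intro i
            rfl
      | single_add a b u ha hb ih =>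
          have hsplit : (monomial (Finsupp.single a b + u) c : Ta n k)
              = monomial u c * X a ^ b := by
            rw [X_pow_eq_monomial, monomial_mul, add_comm, mul_one]
          rw [hsplit, map_mul, map_pow, show (th (X a) : Pa n k) = X (a,0) * X (a,1)
            from aeval_X _ a]
          rw [bp_pair_pow_mul, ih, ← hsplit]

def lst (n : ℕ) (hn : 3 ≤ n) : Fin n := ⟨n-1, by omega⟩

/-- substitution killing the sum of the variables -/
def sb (R : Type*) [CommRing R] (hn : 3 ≤ n) :
    MvPolynomial (Fin n) R →ₐ[R] MvPolynomial (Fin n) R :=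
  aeval fun i => if i = lst n hn then -∑ j ∈ Finset.univ.erase (lst n hn), X j else X i

lemma sb_X (R : Type*) [CommRing R] (hn : 3 ≤ n) (i : Fin n) :
    sb R hn (X i) = if i = lst n hn then -∑ j ∈ Finset.univ.erase (lst n hn), X j else X i :=
  aeval_X _ i

lemma sb_sum_zero (R : Type*) [CommRing R] (hn : 3 ≤ n) :
    sb R hn (∑ i : Fin n, X i) = 0 := by
  rw [map_sum]
  rw [← Finset.add_sum_erase _ _ (Finset.mem_univ (lst n hn))]
  rw [sb_X, if_pos rfl]
  have h2 : ∑ j ∈ Finset.univ.erase (lst n hn), sb R hn (X j)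
      = ∑ j ∈ Finset.univ.erase (lst n hn), X j :=
    Finset.sum_congr rfl (fun i hi => by rw [sb_X, if_neg (Finset.ne_of_mem_erase hi)])
  rw [h2, neg_add_cancel]

lemma sb_map_comm (hn : 3 ≤ n) (w : MvPolynomial (Fin n) ℤ) :
    sb k hn (MvPolynomial.map (Int.castRingHom k) w)
      = MvPolynomial.map (Int.castRingHom k) (sb ℤ hn w) := by
  have : (sb k hn).toRingHom.comp (MvPolynomial.map (Int.castRingHom k))
      = (MvPolynomial.map (Int.castRingHom k)).comp (sb ℤ hn).toRingHom := by
    apply MvPolynomial.ringHom_ext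
    · intro r
      simp only [RingHom.comp_apply, AlgHom.toRingHom_eq_coe, RingHom.coe_coe, map_C]
      rw [show (sb k hn) (C ((Int.castRingHom k) r)) = _ from aeval_C _ _,
        show (sb ℤ hn) (C r) = _ from aeval_C _ _]
      simp [algebraMap_eq]
    · intro i
      simp only [RingHom.comp_apply, AlgHom.toRingHom_eq_coe, RingHom.coe_coe, map_X]
      rw [sb_X, sb_X]
      split_ifs
      · rw [map_neg, map_sum]
        simp
      · rw [map_X]
  exact DFunLike.congr_fun this w

/-- the ideal of p-th powers -/
def Jp (n : ℕ) (k : Type) [Field k] : Ideal (Ta n k) :=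
  Ideal.span (Set.range fun j : Fin n => (X j : Ta n k) ^ p)

lemma coeff_of_mem_Jp (t : Fin n →₀ ℕ) (ht : ∀ j, t j < p) {g : Ta n k}
    (hg : g ∈ Jp (p := p) n k) : coeff t g = 0 := by
  have main : ∀ f : Ta n k, coeff t (f * g) = 0 := by
    refine Submodule.span_induction ?_ ?_ ?_ ?_ hg
    · rintro x ⟨j, rfl⟩ f
      exact coeff_mul_X_pow_eq_zero' t j p (ht j) f
    · intro f
      rw [mul_zero, coeff_zero]
    · intro x y _ _ hx hy f
      rw [mul_add, coeff_add, hx, hy, add_zero]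
    · intro a x _ hx f
      rw [smul_eq_mul, ← mul_assoc]
      exact hx (f * a)
  simpa using main 1

lemma sb_X_pow_mem (hodd : p ≠ 2) (hn : 3 ≤ n) (i : Fin n) :
    (sb k hn (X i)) ^ p ∈ Jp (p := p) n k := by
  haveI : ExpChar (Ta n k) p := ExpChar.prime Fact.out
  rw [sb_X]
  split_ifs with h
  · rw [Odd.neg_pow ((Fact.out (p := p.Prime)).odd_of_ne_two hodd), sum_pow_char]
    apply neg_mem
    apply Ideal.sum_mem
    intro j _
    exact Ideal.subset_span ⟨j, rfl⟩
  · exact Ideal.subset_span ⟨i, rfl⟩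

/-- the defining generators of the ideal of A -/
def Sgen (n : ℕ) (k : Type) [Field k] (p : ℕ) : Set (Pa n k) :=
  insert (∑ i : Fin n, (X (i, (0 : Fin 2)) : Pa n k) * X (i, (1 : Fin 2)))
    (Set.range fun v : Fin n × Fin 2 => (X v : Pa n k) ^ p)

lemma sb_bp_mem_Jp (hodd : p ≠ 2) (hn : 3 ≤ n) {h : Pa n k}
    (hmem : h ∈ Ideal.span (Sgen n k p)) :
    ∀ f : Pa n k, sb k hn (bp (f * h)) ∈ Jp (p := p) n k := by
  refine Submodule.span_induction ?_ ?_ ?_ ?_ hmem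
  · rintro x hx f
    rcases hx with rfl | ⟨v, rfl⟩
    · -- the quadric
      have h1 : f * (∑ i : Fin n, (X (i, (0:Fin 2)) : Pa n k) * X (i, (1:Fin 2)))
          = ∑ i : Fin n, f * (X (i, 0) * X (i, 1)) := Finset.mul_sum _ _ _
      rw [h1, map_sum]
      have h2 : ∀ i : Fin n, bp (f * ((X (i, 0) : Pa n k) * X (i, 1))) = bp f * X i :=
        fun i => bp_pair_mul i f
      rw [Finset.sum_congr rfl fun i _ => h2 i, ← Finset.mul_sum, map_mul, sb_sum_zero, mul_zero]
      exact zero_mem _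
    · obtain ⟨i, ε⟩ := v
      fin_cases ε
      · obtain ⟨g, hg⟩ := bp_xpow0 (p := p) i f
        show sb k hn (bp (f * X (i, (0 : Fin 2)) ^ p)) ∈ Jp (p := p) n k
        rw [hg, map_mul, map_pow]
        exact Ideal.mul_mem_left _ _ (sb_X_pow_mem hodd hn i)
      · obtain ⟨g, hg⟩ := bp_xpow1 (p := p) i f
        show sb k hn (bp (f * X (i, (1 : Fin 2)) ^ p)) ∈ Jp (p := p) n k
        rw [hg, map_mul, map_pow]
        exact Ideal.mul_mem_left _ _ (sb_X_pow_mem hodd hn i)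
  · intro f
    rw [mul_zero, map_zero, map_zero]
    exact zero_mem _
  · intro x y _ _ hx hy f
    rw [mul_add, map_add, map_add]
    exact add_mem (hx f) (hy f)
  · intro a x _ hx f
    rw [smul_eq_mul, ← mul_assoc]
    exact hx (f * a)

theorem theta_w_not_mem (hodd : p ≠ 2) (hn : 3 ≤ n) (w : MvPolynomial (Fin n) ℤ)
    (hw : (∑ i : Fin n, (X i : MvPolynomial (Fin n) ℤ)) ^ p
      = (∑ i : Fin n, (X i : MvPolynomial (Fin n) ℤ) ^ p) + (p : MvPolynomial (Fin n) ℤ) * w) :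
    th (MvPolynomial.map (Int.castRingHom k) w) ∉ Ideal.span (Sgen n k p) := by
  intro hmem
  have hp2 : 2 ≤ p := (Fact.out (p := p.Prime)).two_le
  -- the target exponent vector
  set i0 : Fin n := ⟨0, by omega⟩ with hi0
  set i1 : Fin n := ⟨1, by omega⟩ with hi1
  have h01 : i0 ≠ i1 := by simp [hi0, hi1, Fin.ext_iff]
  set t : Fin n →₀ ℕ := Finsupp.single i0 (p-1) + Finsupp.single i1 1 with hts
  have ht : ∀ j, t j < p := by
    intro j
    rw [hts, Finsupp.add_apply, Finsupp.single_apply, Finsupp.single_apply]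
    rcases eq_or_ne i0 j with rfl | h0
    · rw [if_pos rfl, if_neg (Ne.symm h01)]
      omega
    · rw [if_neg h0]
      split_ifs <;> omega
  -- step 1 : the element is killed
  have h1 := sb_bp_mem_Jp hodd hn hmem 1
  rw [one_mul, bp_th] at h1
  have h2 : coeff t (sb k hn (MvPolynomial.map (Int.castRingHom k) w)) = 0 :=
    coeff_of_mem_Jp t ht h1
  -- step 2 : identify sb ℤ w
  obtain ⟨w', hw'⟩ := exists_w (p := p) (Finset.univ.erase (lst n hn))
    (X : Fin n → MvPolynomial (Fin n) ℤ)
  have hsbw : sb ℤ hn w = w' := by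
    have happ := congrArg (sb ℤ hn) hw
    rw [map_pow, sb_sum_zero, map_add, map_mul, map_sum] at happ
    rw [zero_pow (by omega : p ≠ 0)] at happ
    have hn0 : (sb ℤ hn) (p : MvPolynomial (Fin n) ℤ) = (p : MvPolynomial (Fin n) ℤ) :=
      map_natCast _ p
    rw [hn0] at happ
    have hsplit : ∑ i : Fin n, (sb ℤ hn) ((X i : MvPolynomial (Fin n) ℤ) ^ p)
        = (sb ℤ hn (X (lst n hn))) ^ p + ∑ i ∈ Finset.univ.erase (lst n hn),
            (X i : MvPolynomial (Fin n) ℤ) ^ p := by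
      rw [← Finset.add_sum_erase _ _ (Finset.mem_univ (lst n hn)), map_pow]
      congr 1
      refine Finset.sum_congr rfl fun i hi => ?_
      rw [map_pow, sb_X, if_neg (Finset.ne_of_mem_erase hi)]
    rw [hsplit, sb_X, if_pos rfl,
      Odd.neg_pow ((Fact.out (p := p.Prime)).odd_of_ne_two hodd), hw'] at happ
    -- happ : 0 = -(∑ + p w') + ∑ + p * sb w
    have hkey : (p : MvPolynomial (Fin n) ℤ) * (sb ℤ hn w) = (p : MvPolynomial (Fin n) ℤ) * w' := by
      linear_combination -happ
    have hp0 : (p : MvPolynomial (Fin n) ℤ) ≠ 0 := by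
      rw [← C_eq_coe_nat]
      intro hc
      have := (C_injective (Fin n) ℤ) (hc.trans (map_zero _).symm)
      exact_mod_cast (Fact.out (p := p.Prime)).ne_zero (by exact_mod_cast this)
    exact mul_left_cancel₀ hp0 hkey
  -- step 3 : coefficient of w' at t is 1
  have hc1 : coeff t w' = 1 := by
    have := congrArg (coeff t) hw'
    rw [coeff_add, coeff_target_sum_pow hn _ ?h0 ?h1] at this
    case h0 =>
      apply Finset.mem_erase.mpr
      refine ⟨?_, Finset.mem_univ _⟩
      simp only [lst, ne_eq, Fin.mk.injEq]
      omega
    case h1 =>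
      apply Finset.mem_erase.mpr
      refine ⟨?_, Finset.mem_univ _⟩
      simp only [lst, ne_eq, Fin.mk.injEq]
      omega
    have hz : coeff t (∑ i ∈ Finset.univ.erase (lst n hn),
        (X i : MvPolynomial (Fin n) ℤ) ^ p) = 0 := by
      rw [coeff_sum]
      apply Finset.sum_eq_zero
      intro j _
      rw [X_pow_eq_monomial, coeff_monomial, if_neg]
      intro hc
      have hcc := DFunLike.congr_fun hc j
      rw [Finsupp.single_apply, if_pos rfl] at hcc
      have hcd := ht j
      omega
    rw [hz, zero_add, show ((p : MvPolynomial (Fin n) ℤ)) = C ((p : ℤ))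
      from (C_eq_coe_nat _).symm, coeff_C_mul] at this
    have hpz : (p : ℤ) ≠ 0 := by exact_mod_cast (Fact.out (p := p.Prime)).ne_zero
    have : (p : ℤ) * coeff t w' = (p : ℤ) * 1 := by rw [mul_one]; exact this.symm
    exact mul_left_cancel₀ hpz this
  -- step 4 : contradiction
  rw [sb_map_comm, hsbw, coeff_map, hc1] at h2
  simp at h2


end NoLiftAux

end

open MvPolynomial in
/-- For `n ≥ 3` and `p` an odd prime, the Artinian local `k`-algebra
`A = k[x₁,…,x_{2n}]/(x₁x₂ + … + x_{2n-1}x_{2n}, x₁^p, …, x_{2n}^p)`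
does not admit a flat lifting to `W₂(k)`: there is no flat `W₂(k)`-algebra `B`
with `B/pB ≅ A`.  (The `2n` variables are indexed by `Fin n × Fin 2`.) -/
theorem no_flat_W2_lifting_of_pth_power_quadric
    (p : ℕ) [Fact p.Prime] (hodd : p ≠ 2) (n : ℕ) (hn : 3 ≤ n)
    (k : Type) [Field k] [CharP k p] [ExpChar k p] [PerfectRing k p]
    (B : Type) [CommRing B] [Algebra (TruncatedWittVector p 2 k) B]
    (hB : Module.Flat (TruncatedWittVector p 2 k) B) :
    IsEmpty ((B ⧸ Ideal.span {(p : B)}) ≃+*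
      (MvPolynomial (Fin n × Fin 2) k ⧸ Ideal.span
        (insert (∑ i : Fin n, (X (i, (0 : Fin 2)) : MvPolynomial (Fin n × Fin 2) k) *
            X (i, (1 : Fin 2)))
          (Set.range fun v : Fin n × Fin 2 =>
            (X v : MvPolynomial (Fin n × Fin 2) k) ^ p)))) := by
  classical
  constructor
  intro e
  -- basic facts about p in B
  have hcast : algebraMap (TruncatedWittVector p 2 k) B ((p : TruncatedWittVector p 2 k))
      = (p : B) := map_natCast _ p
  have hpB2 : (p : B) * (p : B) = 0 := by
    rw [← hcast, ← map_mul, ← pow_two, W2_p_sq p k, map_zero]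
  have hann : ∀ b : B, (p : B) * b = 0 → ∃ c : B, b = (p : B) * c := by
    intro b hb
    obtain ⟨c, hc⟩ := flat_ann_p hB ((p : TruncatedWittVector p 2 k))
      (by rw [← pow_two]; exact W2_p_sq p k) (W2_ann_p p k) b (by rw [hcast]; exact hb)
    exact ⟨c, by rw [hc, hcast]⟩
  -- the quotient map to A
  set Sg : Set (MvPolynomial (Fin n × Fin 2) k) :=
    insert (∑ i : Fin n, (X (i, (0 : Fin 2)) : MvPolynomial (Fin n × Fin 2) k) *
        X (i, (1 : Fin 2)))
      (Set.range fun v : Fin n × Fin 2 => (X v : MvPolynomial (Fin n × Fin 2) k) ^ p) with hSg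
  set Aq := MvPolynomial (Fin n × Fin 2) k ⧸ Ideal.span Sg with hAq
  set mkA : MvPolynomial (Fin n × Fin 2) k →+* Aq :=
    Ideal.Quotient.mk (Ideal.span Sg) with hmkA
  set f : B →+* Aq :=
    (e : (B ⧸ Ideal.span {(p : B)}) →+* Aq).comp (Ideal.Quotient.mk (Ideal.span {(p : B)}))
    with hf
  have hfsurj : Function.Surjective f :=
    e.surjective.comp Ideal.Quotient.mk_surjective
  have hker : ∀ b : B, f b = 0 ↔ ∃ c : B, b = (p : B) * c := by
    intro b
    have hfb : f b = e (Ideal.Quotient.mk (Ideal.span {(p : B)}) b) := rfl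
    rw [hfb]
    rw [show ((e (Ideal.Quotient.mk (Ideal.span {(p : B)}) b) = 0)
        ↔ Ideal.Quotient.mk (Ideal.span {(p : B)}) b = 0)
      from ⟨fun h => e.injective (by rw [h, map_zero]), fun h => by rw [h, map_zero]⟩]
    rw [Ideal.Quotient.eq_zero_iff_mem, Ideal.mem_span_singleton']
    constructor
    · rintro ⟨a, rfl⟩
      exact ⟨a, (mul_comm a _)⟩
    · rintro ⟨c, rfl⟩
      exact ⟨c, mul_comm c (p : B)⟩
  -- lifts of the variables
  set Xl : (Fin n × Fin 2) → B := fun v => Function.surjInv hfsurj (mkA (X v)) with hXl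
  have hXlf : ∀ v, f (Xl v) = mkA (X v) := fun v => Function.surjInv_eq hfsurj _
  -- the quadric lifts to a multiple of p
  have hQ : ∃ E : B, (∑ i : Fin n, Xl (i, 0) * Xl (i, 1)) = (p : B) * E := by
    apply (hker _).mp
    rw [map_sum]
    have : ∀ i : Fin n, f (Xl (i, 0) * Xl (i, 1)) = mkA (X (i, 0) * X (i, 1)) := by
      intro i
      rw [map_mul, hXlf, hXlf, ← map_mul]
    rw [Finset.sum_congr rfl fun i _ => this i, ← map_sum]
    rw [Ideal.Quotient.eq_zero_iff_mem]
    exact Ideal.subset_span (Set.mem_insert _ _)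
  have hXp : ∀ v : Fin n × Fin 2, ∃ c : B, Xl v ^ p = (p : B) * c := by
    intro v
    apply (hker _).mp
    rw [map_pow, hXlf, ← map_pow, Ideal.Quotient.eq_zero_iff_mem]
    exact Ideal.subset_span (Set.mem_insert_of_mem _ ⟨v, rfl⟩)
  -- evaluation of integral polynomials
  set ψ : MvPolynomial (Fin n) ℤ →ₐ[ℤ] B := aeval fun i => Xl (i, 0) * Xl (i, 1) with hψ
  obtain ⟨w, hw⟩ := NoLiftAux.exists_w (p := p) Finset.univ
    (X : Fin n → MvPolynomial (Fin n) ℤ)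
  -- apply ψ to the universal identity
  have happ := congrArg ψ hw
  have hU : ∀ i : Fin n, ψ (X i) = Xl (i, 0) * Xl (i, 1) := fun i => aeval_X _ i
  have hlhs : ψ ((∑ i : Fin n, (X i : MvPolynomial (Fin n) ℤ)) ^ p) = 0 := by
    obtain ⟨E, hE⟩ := hQ
    rw [map_pow, map_sum]
    rw [Finset.sum_congr rfl fun i _ => hU i, hE, mul_pow]
    have hppow : (p : B) ^ p = 0 := by
      have h2 : (p : B) ^ 2 = 0 := by rw [pow_two]; exact hpB2
      have : (p : B) ^ p = (p : B) ^ 2 * (p : B) ^ (p - 2) := by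
        rw [← pow_add]
        congr 1
        have := (Fact.out (p := p.Prime)).two_le
        omega
      rw [this, h2, zero_mul]
    rw [hppow, zero_mul]
  have hmid : ψ (∑ i : Fin n, (X i : MvPolynomial (Fin n) ℤ) ^ p) = 0 := by
    rw [map_sum]
    apply Finset.sum_eq_zero
    intro i _
    rw [map_pow, hU, mul_pow]
    obtain ⟨c0, hc0⟩ := hXp (i, 0)
    obtain ⟨c1, hc1⟩ := hXp (i, 1)
    rw [hc0, hc1]
    calc (p : B) * c0 * ((p : B) * c1) = ((p : B) * (p : B)) * (c0 * c1) := by ring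
    _ = 0 := by rw [hpB2, zero_mul]
  have hlast : (p : B) * ψ w = 0 := by
    have : ψ ((p : MvPolynomial (Fin n) ℤ) * w) = (p : B) * ψ w := by
      rw [map_mul, map_natCast]
    rw [hlhs, map_add, hmid, zero_add, this] at happ
    exact happ.symm
  -- hence f (ψ w) = 0
  obtain ⟨c, hc⟩ := hann _ hlast
  have hpA : (p : Aq) = 0 := by
    rw [show ((p : Aq)) = mkA ((p : MvPolynomial (Fin n × Fin 2) k)) from (map_natCast mkA p).symm,
      CharP.cast_eq_zero, map_zero]
  have hfψ : f (ψ w) = 0 := by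
    rw [hc, map_mul, map_natCast, hpA, zero_mul]
  -- identify f ∘ ψ with mkA ∘ th ∘ map
  have hcomm : f.comp (ψ : MvPolynomial (Fin n) ℤ →+* B)
      = (mkA.comp (NoLiftAux.th (n := n) (k := k) : MvPolynomial (Fin n) k →+* _)).comp
          (MvPolynomial.map (Int.castRingHom k)) := by
    apply MvPolynomial.ringHom_ext
    · intro r
      simp only [RingHom.comp_apply, RingHom.coe_coe, map_C]
      rw [show ψ (C r) = algebraMap ℤ B r from aeval_C _ r]
      rw [show (NoLiftAux.th (n := n) (k := k)) (C ((Int.castRingHom k) r))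
        = algebraMap k _ ((Int.castRingHom k) r) from aeval_C _ _]
      simp only [algebraMap_int_eq, eq_intCast, map_intCast, algebraMap_eq]
      -- (goal closed by simp)
    · intro i
      simp only [RingHom.comp_apply, RingHom.coe_coe, map_X]
      rw [hU, show (NoLiftAux.th (n := n) (k := k)) (X i) = X (i, 0) * X (i, 1)
        from aeval_X _ i]
      rw [map_mul, hXlf, hXlf, map_mul]
  have hfinal : mkA (NoLiftAux.th (MvPolynomial.map (Int.castRingHom k) w)) = 0 := by
    have := DFunLike.congr_fun hcomm w
    simp only [RingHom.comp_apply, RingHom.coe_coe] at this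
    rw [← this, hfψ]
  rw [Ideal.Quotient.eq_zero_iff_mem] at hfinal
  exact NoLiftAux.theta_w_not_mem hodd hn w hw hfinal
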